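/- Let m ≥ 3 be odd, n ≥ m, and σ ∈ Aₙ. Then with m−2 outsiders added, σ⁻¹ can be written as a product of m-cycles in S_{n+(m−2)}, each of which moves at least one outsider, such that all the m-cycles in the product have pairwise distinct supports (as sets of m elements). -/

import Mathlib

open Equiv List

private lemma swap_id {α : Type*} [DecidableEq α] (a b x y : α)
    (hab : a ≠ b) (hax : a ≠ x) (hay : a ≠ y) (hbx : b ≠ x) (hby : b ≠ y) (hxy : x ≠ y) :
    Equiv.swap a x * Equiv.swap x y * Equiv.swap a b * Equiv.swap b x =
      Equiv.swap a b * Equiv.swap b y := by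
  have sab := hab.symm; have sax := hax.symm; have say := hay.symm
  have sbx := hbx.symm; have sby := hby.symm; have sxy := hxy.symm
  ext z
  simp only [Equiv.Perm.mul_apply]
  by_cases h1 : z = a <;> by_cases h2 : z = b <;> by_cases h3 : z = x <;> by_cases h4 : z = y <;>
    subst_vars <;>
    simp_all [Equiv.swap_apply_def]

private lemma cycle_mul {α : Type*} [DecidableEq α] (a b x y : α) (ys' : List α)
    (h : (a :: b :: x :: y :: ys').Nodup) :
    formPerm (a :: x :: y :: ys') * formPerm [a, b, x] = formPerm (a :: b :: y :: ys') := by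
  simp only [List.nodup_cons, List.mem_cons, not_or] at h
  obtain ⟨⟨hab, hax, hay, hays⟩, ⟨hbx, hby, hbys⟩, ⟨hxy, hxys⟩, hyys, hys⟩ := h
  set F := formPerm (y :: ys') with hF
  have hcom : ∀ c d : α, c ∉ (y :: ys') → d ∉ (y :: ys') →
      Commute (Equiv.swap c d) F := by
    intro c d hc hd
    apply Equiv.Perm.Disjoint.commute
    intro z
    rcases eq_or_ne z c with rfl | h1
    · right; exact formPerm_apply_of_notMem hc
    rcases eq_or_ne z d with rfl | h2
    · right; exact formPerm_apply_of_notMem hd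
    · left; exact Equiv.swap_apply_of_ne_of_ne h1 h2
  have hamem : a ∉ (y :: ys') := by simp [hay, hays]
  have hbmem : b ∉ (y :: ys') := by simp [hby, hbys]
  have hxmem : x ∉ (y :: ys') := by simp [hxy, hxys]
  have h1 : formPerm (a :: x :: y :: ys') = Equiv.swap a x * Equiv.swap x y * F := by
    rw [formPerm_cons_cons, formPerm_cons_cons, mul_assoc]
  have h2 : formPerm (a :: b :: y :: ys') = Equiv.swap a b * Equiv.swap b y * F := by
    rw [formPerm_cons_cons, formPerm_cons_cons, mul_assoc]
  have h3 : formPerm [a, b, x] = Equiv.swap a b * Equiv.swap b x := by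
    rw [formPerm_cons_cons, formPerm_cons_cons, formPerm_singleton, mul_one]
  have c1 := (hcom a b hamem hbmem).eq
  have c2 := (hcom b x hbmem hxmem).eq
  rw [h1, h2, h3]
  calc Equiv.swap a x * Equiv.swap x y * F * (Equiv.swap a b * Equiv.swap b x)
      = Equiv.swap a x * Equiv.swap x y * (F * Equiv.swap a b) * Equiv.swap b x := by
        simp only [mul_assoc]
    _ = Equiv.swap a x * Equiv.swap x y * (Equiv.swap a b * F) * Equiv.swap b x := by
        rw [← c1]
    _ = Equiv.swap a x * Equiv.swap x y * Equiv.swap a b * (F * Equiv.swap b x) := by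
        simp only [mul_assoc]
    _ = Equiv.swap a x * Equiv.swap x y * Equiv.swap a b * (Equiv.swap b x * F) := by
        rw [← c2]
    _ = Equiv.swap a x * Equiv.swap x y * Equiv.swap a b * Equiv.swap b x * F := by
        simp only [mul_assoc]
    _ = Equiv.swap a b * Equiv.swap b y * F := by
        rw [swap_id a b x y hab hax hay hbx hby hxy]

private lemma key {α : Type*} [DecidableEq α] [Fintype α] (m : ℕ) (hm : 3 ≤ m)
    (ys : List α) (hysn : ys.Nodup) (hlen : ys.length = m - 2) :
    ∀ (k : ℕ) (τ : Equiv.Perm α), τ.support.card = k →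
    Equiv.Perm.sign τ = 1 → Disjoint τ.support ys.toFinset →
    ∃ cs : List (Equiv.Perm α),
      τ = cs.prod ∧
      (∀ c ∈ cs, c.IsCycle ∧ c.support.card = m ∧ ys.toFinset ⊆ c.support ∧
        c.support ⊆ ys.toFinset ∪ τ.support) ∧
      cs.Pairwise (fun c d => c.support ≠ d.support) := by
  intro k
  induction k using Nat.strong_induction_on with
  | _ k IH =>
  intro τ hk hsign hdisj
  rcases eq_or_ne τ 1 with rfl | hτ
  · exact ⟨[], by simp, by simp, by simp⟩
  -- pick a, b, x in the support
  have hex : ∃ a, τ a ≠ a := by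
    by_contra h
    push_neg at h
    exact hτ (Equiv.ext h)
  obtain ⟨a, ha⟩ := hex
  have haS : a ∈ τ.support := Equiv.Perm.mem_support.mpr ha
  set b := τ a with hb
  have hbS : b ∈ τ.support := Equiv.Perm.apply_mem_support.mpr haS
  have hab : a ≠ b := fun h => ha h.symm
  have hcard3 : 3 ≤ τ.support.card := by
    have h1 : 1 < τ.support.card := Equiv.Perm.one_lt_card_support_of_ne_one hτ
    have h2 : τ.support.card ≠ 2 := by
      intro h
      obtain ⟨u, v, huv, rfl⟩ := Equiv.Perm.card_support_eq_two.mp h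
      rw [Equiv.Perm.sign_swap huv] at hsign
      exact (by decide : (-1 : ℤˣ) ≠ 1) hsign
    omega
  have hxex : ∃ x, x ∈ τ.support ∧ x ≠ a ∧ x ≠ b := by
    have h1 : 0 < ((τ.support.erase a).erase b).card := by
      have e1 : (τ.support.erase a).card = τ.support.card - 1 :=
        Finset.card_erase_of_mem haS
      have hbe : b ∈ τ.support.erase a := Finset.mem_erase.mpr ⟨hab.symm, hbS⟩
      have e2 : ((τ.support.erase a).erase b).card = (τ.support.erase a).card - 1 :=
        Finset.card_erase_of_mem hbe
      omega
    obtain ⟨x, hx⟩ := Finset.card_pos.mp h1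
    have hx1 := Finset.mem_erase.mp hx
    have hx2 := Finset.mem_erase.mp hx1.2
    exact ⟨x, hx2.2, hx2.1, hx1.1⟩
  obtain ⟨x, hxS, hxa, hxb⟩ := hxex
  -- destructure ys
  obtain ⟨y, ys', rfl⟩ : ∃ y ys', ys = y :: ys' := by
    cases ys with
    | nil => simp at hlen; omega
    | cons y ys' => exact ⟨y, ys', rfl⟩
  have hnotin : ∀ z ∈ τ.support, z ∉ (y :: ys') := by
    intro z hz hzm
    exact Finset.disjoint_left.mp hdisj hz (List.mem_toFinset.mpr hzm)
  have hbig : (a :: b :: x :: y :: ys').Nodup := by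
    have hna := hnotin a haS
    have hnb := hnotin b hbS
    have hnx := hnotin x hxS
    simp only [List.nodup_cons, List.mem_cons, not_or] at *
    exact ⟨⟨hab, fun h => hxa h.symm, hna.1, hna.2⟩,
      ⟨fun h => hxb h.symm, hnb.1, hnb.2⟩, ⟨hnx.1, hnx.2⟩, hysn⟩
  -- the 3-cycle
  have hbx : b ≠ x := fun h => hxb h.symm
  have hax : a ≠ x := hxa.symm
  set c3 := formPerm [a, b, x] with hc3def
  have hc3 : c3 = Equiv.swap a b * Equiv.swap b x := by
    rw [hc3def, formPerm_cons_cons, formPerm_cons_cons, formPerm_singleton, mul_one]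
  have hsign3 : Equiv.Perm.sign c3 = 1 := by
    rw [hc3, map_mul, Equiv.Perm.sign_swap hab, Equiv.Perm.sign_swap hbx]
    decide
  have hc3supp : c3.support ⊆ τ.support := by
    intro z hz
    have h1 := Equiv.Perm.support_mul_le (Equiv.swap a b) (Equiv.swap b x) (hc3 ▸ hz)
    rw [Equiv.Perm.support_swap hab, Equiv.Perm.support_swap hbx] at h1
    simp only [Finset.sup_eq_union, Finset.mem_union, Finset.mem_insert,
      Finset.mem_singleton] at h1
    rcases h1 with (rfl | rfl) | (rfl | rfl)
    exacts [haS, hbS, hbS, hxS]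
  have hc3a : c3 a = b := by
    rw [hc3, Equiv.Perm.mul_apply, Equiv.swap_apply_of_ne_of_ne hab hax,
      Equiv.swap_apply_left]
  set τ' := c3⁻¹ * τ with hτ'def
  have hττ' : τ = c3 * τ' := by rw [hτ'def, mul_inv_cancel_left]
  have hτ'a : τ' a = a := by
    have h1 : c3⁻¹ b = a := by rw [← hc3a]; exact Equiv.symm_apply_apply c3 a
    rw [hτ'def, Equiv.Perm.mul_apply, ← hb, h1]
  have hsub : τ'.support ⊆ τ.support := by
    intro z hz
    by_contra hzs
    have hτz : τ z = z := Equiv.Perm.notMem_support.mp hzs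
    have hzi : c3⁻¹ z = z := by
      have h2 : z ∉ (c3⁻¹).support := by
        rw [Equiv.Perm.support_inv]
        exact fun hc => hzs (hc3supp hc)
      exact Equiv.Perm.notMem_support.mp h2
    exact Equiv.Perm.mem_support.mp hz (by rw [hτ'def, Equiv.Perm.mul_apply, hτz, hzi])
  have haτ' : a ∉ τ'.support := Equiv.Perm.notMem_support.mpr hτ'a
  have hlt : τ'.support.card < k := by
    rw [← hk]
    exact Finset.card_lt_card ⟨hsub, fun hss => haτ' (hss haS)⟩
  have hsign' : Equiv.Perm.sign τ' = 1 := by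
    rw [hτ'def, map_mul, map_inv, hsign3, hsign]
    rfl
  have hdisj' : Disjoint τ'.support ((y :: ys').toFinset) :=
    Finset.disjoint_of_subset_left hsub hdisj
  obtain ⟨cs', hprod', hcond', hpw'⟩ := IH _ hlt τ' rfl hsign' hdisj'
  -- the two m-cycles
  set A := formPerm (a :: b :: y :: ys') with hA
  set G := formPerm (a :: x :: y :: ys') with hG
  have s1 : (a :: x :: y :: ys') <+ (a :: b :: x :: y :: ys') :=
    ((List.sublist_cons_self b (x :: y :: ys'))).cons₂ a
  have s2 : (a :: b :: y :: ys') <+ (a :: b :: x :: y :: ys') :=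
    (((List.sublist_cons_self x (y :: ys'))).cons₂ b).cons₂ a
  have n1 : (a :: b :: y :: ys').Nodup := hbig.sublist s2
  have n2 : (a :: x :: y :: ys').Nodup := hbig.sublist s1
  have hlen1 : (a :: b :: y :: ys').length = m := by
    simp only [List.length_cons] at hlen ⊢; omega
  have hlen2 : (a :: x :: y :: ys').length = m := by
    simp only [List.length_cons] at hlen ⊢; omega
  have hsA : A.support = (a :: b :: y :: ys').toFinset :=
    support_formPerm_of_nodup _ n1 (fun z => by simp)
  have hsG : G.support = (a :: x :: y :: ys').toFinset :=
    support_formPerm_of_nodup _ n2 (fun z => by simp)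
  have hsGi : (G⁻¹).support = (a :: x :: y :: ys').toFinset := by
    rw [Equiv.Perm.support_inv, hsG]
  have hGA : G * c3 = A := cycle_mul a b x y ys' hbig
  have hc3GA : c3 = G⁻¹ * A := by rw [← hGA, inv_mul_cancel_left]
  have hnaL : a ∉ (y :: ys') := hnotin a haS
  have hnbL : b ∉ (y :: ys') := hnotin b hbS
  have hnxL : x ∉ (y :: ys') := hnotin x hxS
  have haτ'2 : a ∉ (y :: ys').toFinset ∪ τ'.support := by
    simp only [Finset.mem_union, List.mem_toFinset]
    exact fun h => h.elim hnaL haτ'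
  refine ⟨G⁻¹ :: A :: cs', ?_, ?_, ?_⟩
  · rw [List.prod_cons, List.prod_cons, ← hprod', hττ', hc3GA, mul_assoc]
  · intro c hc
    simp only [List.mem_cons] at hc
    have hsubYs : ∀ u v : α, (y :: ys').toFinset ⊆ (u :: v :: y :: ys').toFinset := by
      intro u v z hz
      simp only [List.mem_toFinset, List.mem_cons] at hz ⊢
      tauto
    rcases hc with rfl | rfl | hc
    · refine ⟨(isCycle_formPerm n2 (by omega)).inv, ?_, ?_, ?_⟩
      · rw [hsGi, List.toFinset_card_of_nodup n2, hlen2]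
      · rw [hsGi]; exact hsubYs a x
      · rw [hsGi]
        intro z hz
        simp only [List.mem_toFinset, List.mem_cons] at hz
        simp only [Finset.mem_union, List.mem_toFinset, List.mem_cons]
        rcases hz with rfl | rfl | h
        · exact Or.inr haS
        · exact Or.inr hxS
        · exact Or.inl h
    · refine ⟨isCycle_formPerm n1 (by omega), ?_, ?_, ?_⟩
      · rw [hsA, List.toFinset_card_of_nodup n1, hlen1]
      · rw [hsA]; exact hsubYs a b
      · rw [hsA]
        intro z hz
        simp only [List.mem_toFinset, List.mem_cons] at hz
        simp only [Finset.mem_union, List.mem_toFinset, List.mem_cons]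
        rcases hz with rfl | rfl | h
        · exact Or.inr haS
        · exact Or.inr hbS
        · exact Or.inl h
    · obtain ⟨h1, h2, h3, h4⟩ := hcond' c hc
      exact ⟨h1, h2, h3, h4.trans (Finset.union_subset_union (le_refl _) hsub)⟩
  · have hacs' : ∀ c ∈ cs', a ∉ c.support := by
      intro c hc hac
      exact haτ'2 ((hcond' c hc).2.2.2 hac)
    refine List.pairwise_cons.mpr ⟨?_, List.pairwise_cons.mpr ⟨?_, hpw'⟩⟩
    · intro d hd
      simp only [List.mem_cons] at hd
      rcases hd with rfl | hd
      · intro h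
        rw [hsGi, hsA] at h
        have hbmem : b ∈ (a :: x :: y :: ys').toFinset := by
          rw [h]; simp
        simp only [List.mem_toFinset, List.mem_cons] at hbmem
        rcases hbmem with h' | h' | h'
        · exact hab h'.symm
        · exact hbx h'
        · exact hnbL (List.mem_cons.mpr h')
      · intro h
        have hamem : a ∈ d.support := by
          rw [← h, hsGi]; simp
        exact hacs' d hd hamem
    · intro d hd h
      have hamem : a ∈ d.support := by
        rw [← h, hsA]; simp
      exact hacs' d hd hamem

theorem stmt11 (m n : ℕ) (hm : 3 ≤ m) (hodd : Odd m) (hmn : m ≤ n)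
    (σ : Equiv.Perm (Fin (n + (m - 2))))
    (hfix : ∀ i : Fin (n + (m - 2)), n ≤ i.val → σ i = i)
    (hsign : Equiv.Perm.sign σ = 1) :
    ∃ cs : List (Equiv.Perm (Fin (n + (m - 2)))),
      σ⁻¹ = cs.prod ∧
      (∀ c ∈ cs, c.IsCycle ∧ c.support.card = m ∧
        ∃ i : Fin (n + (m - 2)), n ≤ i.val ∧ c i ≠ i) ∧
      cs.Pairwise (fun c d => c.support ≠ d.support) := by
  have h2m : 1 ≤ m - 2 := by omega
  set ys : List (Fin (n + (m - 2))) := (List.finRange (m - 2)).map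
      (fun k => ⟨n + k.val, by have := k.isLt; omega⟩) with hys
  have hnodup : ys.Nodup := by
    refine (List.nodup_finRange _).map ?_
    intro k1 k2 h
    have : n + k1.val = n + k2.val := congrArg Fin.val h
    exact Fin.ext (by omega)
  have hlen : ys.length = m - 2 := by simp [hys]
  have hsign' : Equiv.Perm.sign σ⁻¹ = 1 := by rw [map_inv, hsign, inv_one]
  have hval : ∀ i ∈ ys.toFinset, n ≤ (i : Fin (n + (m - 2))).val := by
    intro i hi
    rw [List.mem_toFinset, hys] at hi
    obtain ⟨k, _, rfl⟩ := List.mem_map.mp hi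
    simp
  have hdisj : Disjoint (σ⁻¹).support ys.toFinset := by
    rw [Finset.disjoint_left]
    intro i hi him
    rw [Equiv.Perm.support_inv] at hi
    exact Equiv.Perm.mem_support.mp hi (hfix i (hval i him))
  obtain ⟨cs, hprod, hcond, hpw⟩ :=
    key m hm ys hnodup hlen ((σ⁻¹).support.card) σ⁻¹ rfl hsign' hdisj
  refine ⟨cs, hprod, ?_, hpw⟩
  intro c hc
  obtain ⟨hcyc, hcard, hsubY, _⟩ := hcond c hc
  refine ⟨hcyc, hcard, ⟨n, by omega⟩, le_refl n, ?_⟩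
  have hy0 : (⟨n, by omega⟩ : Fin (n + (m - 2))) ∈ ys := by
    refine List.mem_map.mpr ⟨⟨0, by omega⟩, List.mem_finRange _, ?_⟩
    exact Fin.ext (by simp)
  exact Equiv.Perm.mem_support.mp (hsubY (List.mem_toFinset.mpr hy0))
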